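/- If v = (v_u, v_s) ∈ E_u × E_s satisfies ‖v_s‖ ≤ κ·‖v_u‖, then the image w = A(v) satisfies ‖w_u‖ ≥ (m − ‖A_us‖·κ)·‖v_u‖ and ‖w_s‖ ≤ (‖A_ss‖·κ + ‖A_su‖)·‖v_u‖; consequently (m − ‖A_us‖·κ)·‖w_s‖ ≤ (‖A_ss‖·κ + ‖A_su‖)·‖w_u‖. -/

import Mathlib

theorem stmt_5 {Eu Es Fu Fs : Type*}
    [NormedAddCommGroup Eu] [NormedSpace ℝ Eu]
    [NormedAddCommGroup Es] [NormedSpace ℝ Es]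
    [NormedAddCommGroup Fu] [NormedSpace ℝ Fu]
    [NormedAddCommGroup Fs] [NormedSpace ℝ Fs]
    (A : Eu × Es →L[ℝ] Fu × Fs)
    (Auu : Eu →L[ℝ] Fu) (Aus : Es →L[ℝ] Fu) (Asu : Eu →L[ℝ] Fs) (Ass : Es →L[ℝ] Fs)
    (hA : ∀ (vu : Eu) (vs : Es), A (vu, vs) = (Auu vu + Aus vs, Asu vu + Ass vs))
    (κ m : ℝ) (hκ : 0 ≤ κ) (hm : 0 < m)
    (hAuu : ∀ w : Eu, m * ‖w‖ ≤ ‖Auu w‖)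
    (hpos : 0 < m - ‖Aus‖ * κ)
    (vu : Eu) (vs : Es) (hv : ‖vs‖ ≤ κ * ‖vu‖) :
    (m - ‖Aus‖ * κ) * ‖vu‖ ≤ ‖(A (vu, vs)).1‖ ∧
    ‖(A (vu, vs)).2‖ ≤ (‖Ass‖ * κ + ‖Asu‖) * ‖vu‖ ∧
    (m - ‖Aus‖ * κ) * ‖(A (vu, vs)).2‖ ≤ (‖Ass‖ * κ + ‖Asu‖) * ‖(A (vu, vs)).1‖ := by
  rw [hA]
  have hus : ‖Aus vs‖ ≤ ‖Aus‖ * κ * ‖vu‖ := by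
    calc ‖Aus vs‖ ≤ ‖Aus‖ * ‖vs‖ := Aus.le_opNorm vs
    _ ≤ ‖Aus‖ * (κ * ‖vu‖) := by
        exact mul_le_mul_of_nonneg_left hv (norm_nonneg _)
    _ = ‖Aus‖ * κ * ‖vu‖ := by ring
  have h1 : (m - ‖Aus‖ * κ) * ‖vu‖ ≤ ‖Auu vu + Aus vs‖ := by
    have key : ‖Auu vu‖ ≤ ‖Auu vu + Aus vs‖ + ‖Aus vs‖ := by
      have := norm_add_le (Auu vu + Aus vs) (-(Aus vs))
      simpa using this
    have h2 := hAuu vu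
    linarith
  have h2 : ‖Asu vu + Ass vs‖ ≤ (‖Ass‖ * κ + ‖Asu‖) * ‖vu‖ := by
    calc ‖Asu vu + Ass vs‖ ≤ ‖Asu vu‖ + ‖Ass vs‖ := norm_add_le _ _
    _ ≤ ‖Asu‖ * ‖vu‖ + ‖Ass‖ * ‖vs‖ := add_le_add (Asu.le_opNorm vu) (Ass.le_opNorm vs)
    _ ≤ ‖Asu‖ * ‖vu‖ + ‖Ass‖ * (κ * ‖vu‖) :=
        add_le_add_right (mul_le_mul_of_nonneg_left hv (norm_nonneg _)) _
    _ = (‖Ass‖ * κ + ‖Asu‖) * ‖vu‖ := by ring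
  refine ⟨h1, h2, ?_⟩
  have hC : 0 ≤ ‖Ass‖ * κ + ‖Asu‖ := by positivity
  nlinarith
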